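/- Let σ ∈ ℝ be fixed. Let (r_j) be a sequence of reals tending to +∞, let (ω_j) be positive reals with ω_j · log(r_j) / log(log(r_j)) → 0, and let (r'_j), (r''_j) be sequences of reals satisfying |r'_j − r_j| < ω_j and |r''_j − r_j| < ω_j for all j. Then Γ(σ + i r'_j) / Γ(σ + i r''_j) − exp(i (r'_j − r''_j) · log r_j) → 0 as j → ∞. -/

import Mathlib

open Complex Filter Topology Finset

lemma add_nat_im_ne (s : ℂ) (hs : s.im ≠ 0) (k : ℕ) : s + (k:ℂ) ≠ 0 := by
  intro H
  apply hs
  have := congrArg Complex.im H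
  simpa using this

lemma gammaSeq_ratio (s' s'' : ℂ) (hs' : s'.im ≠ 0) (hs'' : s''.im ≠ 0) {n : ℕ} (hn : 1 ≤ n) :
    Complex.GammaSeq s' n / Complex.GammaSeq s'' n =
      Complex.exp ((s' - s'') * (Real.log n : ℂ) +
        ∑ k ∈ Finset.range (n+1), (Complex.log (s'' + k) - Complex.log (s' + k))) := by
  have hn0 : (n:ℂ) ≠ 0 := Nat.cast_ne_zero.mpr (by omega)
  have hfac : ((Nat.factorial n : ℕ) : ℂ) ≠ 0 := Nat.cast_ne_zero.mpr (Nat.factorial_ne_zero n)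
  have hp' : ∀ k ∈ Finset.range (n+1), s' + (k:ℂ) ≠ 0 := fun k _ => add_nat_im_ne s' hs' k
  have hp'' : ∀ k ∈ Finset.range (n+1), s'' + (k:ℂ) ≠ 0 := fun k _ => add_nat_im_ne s'' hs'' k
  have hP' : (∏ j ∈ Finset.range (n+1), (s' + (j:ℂ))) ≠ 0 := Finset.prod_ne_zero_iff.mpr hp'
  have hP'' : (∏ j ∈ Finset.range (n+1), (s'' + (j:ℂ))) ≠ 0 := Finset.prod_ne_zero_iff.mpr hp''
  have hlogn : Complex.log (n:ℂ) = (Real.log n : ℂ) := by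
    rw [show ((n:ℕ):ℂ) = (((n:ℝ)):ℂ) by push_cast; ring, Complex.ofReal_log (Nat.cast_nonneg n)]
  have hcpow : ∀ s : ℂ, (n:ℂ) ^ s = Complex.exp (s * (Real.log n : ℂ)) := by
    intro s
    rw [Complex.cpow_def_of_ne_zero hn0, hlogn, mul_comm]
  rw [Complex.GammaSeq, Complex.GammaSeq]
  rw [Complex.exp_add, Complex.exp_sum]
  have hratio : ∀ k ∈ Finset.range (n+1),
      Complex.exp (Complex.log (s'' + k) - Complex.log (s' + k)) = (s'' + k) / (s' + k) := by
    intro k hk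
    rw [Complex.exp_sub, Complex.exp_log (hp'' k hk), Complex.exp_log (hp' k hk)]
  rw [Finset.prod_congr rfl hratio, Finset.prod_div_distrib]
  rw [hcpow s', hcpow s'']
  rw [show (s' - s'') * (Real.log n : ℂ) = s' * (Real.log n : ℂ) - s'' * (Real.log n : ℂ) by ring,
    Complex.exp_sub]
  field_simp

lemma log_shift_tendsto (s : ℂ) (hs : s.im ≠ 0) :
    Tendsto (fun n : ℕ => Complex.log (s + n + 1) - (Real.log n : ℂ)) atTop (𝓝 0) := by
  have h1 : Tendsto (fun n : ℕ => 1 + (s+1) / n) atTop (𝓝 1) := by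
    have hinv : Tendsto (fun n : ℕ => ((n:ℂ))⁻¹) atTop (𝓝 0) := by
      have : Tendsto (fun n : ℕ => (((n:ℝ)⁻¹ : ℝ) : ℂ)) atTop (𝓝 ((0:ℝ):ℂ)) :=
        (Complex.continuous_ofReal.tendsto _).comp tendsto_inv_atTop_nhds_zero_nat
      simpa using this
    have : Tendsto (fun n : ℕ => (s+1) / n) atTop (𝓝 0) := by
      simpa [div_eq_mul_inv] using tendsto_const_nhds.mul hinv
    simpa using tendsto_const_nhds.add this
  have h2 : Tendsto (fun n : ℕ => Complex.log (1 + (s+1)/n)) atTop (𝓝 0) := by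
    have := (continuousAt_clog one_mem_slitPlane).tendsto.comp h1
    simpa [Function.comp_def] using this
  apply h2.congr'
  filter_upwards [eventually_ge_atTop 1] with n hn
  have hn0 : (0:ℝ) < (n:ℝ) := by exact_mod_cast hn
  have hnc : ((n:ℝ):ℂ) ≠ 0 := by exact_mod_cast hn0.ne'
  have hmul : ((n:ℝ):ℂ) * (((n:ℝ):ℂ))⁻¹ = 1 := mul_inv_cancel₀ hnc
  have hnc' : ((n:ℕ):ℂ) ≠ 0 := Nat.cast_ne_zero.mpr (by omega)
  have key : s + n + 1 = ((n:ℝ):ℂ) * (1 + (s+1)/n) := by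
    have h3 : ((n:ℕ):ℂ) * ((s+1)/((n:ℕ):ℂ)) = s + 1 := by
      rw [mul_comm]; exact div_mul_cancel₀ _ hnc'
    push_cast at h3 ⊢
    linear_combination -h3
  have hne : s + (n:ℂ) + 1 ≠ 0 := by
    intro H
    apply hs
    have := congrArg Complex.im H
    simpa using this
  have hx : (1 + (s+1)/(n:ℂ) : ℂ) ≠ 0 := by
    intro H
    apply hne
    rw [key]
    push_cast
    rw [H, mul_zero]
  rw [key, Complex.log_ofReal_mul hn0 hx]
  push_cast
  ring

lemma norm_lower (z : ℂ) (a b : ℝ) (ha : 0 ≤ a) (hA : a ≤ |z.re|) (hb : 0 ≤ b)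
    (hB : b ≤ |z.im|) : Real.sqrt (a^2 + b^2) ≤ ‖z‖ := by
  rw [Complex.norm_def, Complex.normSq_apply]
  apply Real.sqrt_le_sqrt
  have h1 : a^2 ≤ z.re^2 := by
    calc a^2 ≤ |z.re|^2 := by exact pow_le_pow_left₀ ha hA 2
    _ = z.re^2 := sq_abs _
  have h2 : b^2 ≤ z.im^2 := by
    calc b^2 ≤ |z.im|^2 := by exact pow_le_pow_left₀ hb hB 2
    _ = z.im^2 := sq_abs _
  nlinarith [h1, h2]


lemma log_diff_eq_integral (s h : ℂ)
    (hc : ∀ τ : ℝ, τ ∈ Set.uIcc (0:ℝ) 1 → (s + τ * h).im ≠ 0) :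
    Complex.log (s + h) - Complex.log s = ∫ τ in (0:ℝ)..1, h / (s + τ * h) := by
  have hne : ∀ τ : ℝ, τ ∈ Set.uIcc (0:ℝ) 1 → s + τ * h ≠ 0 := by
    intro τ hτ hz
    exact hc τ hτ (by rw [hz]; simp)
  have hd : ∀ τ : ℝ, τ ∈ Set.uIcc (0:ℝ) 1 →
      HasDerivAt (fun τ : ℝ => Complex.log (s + τ * h)) (h / (s + τ * h)) τ := by
    intro τ hτ
    have h1 : HasDerivAt (fun z : ℂ => s + z * h) h (τ : ℂ) := by
      simpa using ((hasDerivAt_id (τ : ℂ)).mul_const h).const_add s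
    have h2 : HasDerivAt (fun z : ℂ => Complex.log (s + z * h)) (h / (s + τ * h)) (τ : ℂ) :=
      h1.clog (Or.inr (hc τ hτ))
    exact h2.comp_ofReal
  have hcont : ContinuousOn (fun τ : ℝ => h / (s + τ * h)) (Set.uIcc (0:ℝ) 1) := by
    apply ContinuousOn.div continuousOn_const
    · fun_prop
    · exact hne
  rw [intervalIntegral.integral_eq_sub_of_hasDerivAt hd (hcont.intervalIntegrable)]
  simp

lemma div_sub_div_helper (h a b : ℂ) (ha : a ≠ 0) (hb : b ≠ 0) :
    h/b - h/a = h*(a-b)/(a*b) := by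
  field_simp

lemma gamma_ratio_key (σ t' t'' : ℝ) (hd : |t' - t''| ≤ 1/3)
    (ht'' : |σ| + 11 ≤ t'') (ht' : |σ| + 11 ≤ t') :
    ∃ P : ℂ, Complex.Gamma ((σ:ℂ) + (t':ℂ) * I) / Complex.Gamma ((σ:ℂ) + (t'':ℂ) * I) =
      Complex.exp (I * ((t':ℂ) - (t'':ℂ)) * Complex.log ((σ:ℂ) + (t'':ℂ) * I)) * P ∧
      ‖P - 1‖ ≤ 6 * |t' - t''| := by
  have habs : 0 ≤ |σ| := abs_nonneg σ
  set s'' : ℂ := (σ:ℂ) + (t'':ℂ) * I with hs''def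
  set s' : ℂ := (σ:ℂ) + (t':ℂ) * I with hs'def
  set h : ℂ := I * ((t':ℂ) - (t'':ℂ)) with hhdef
  have hh : h = ((t' - t'' : ℝ):ℂ) * I := by rw [hhdef]; push_cast; ring
  have hnormh : ‖h‖ = |t' - t''| := by
    rw [hh, norm_mul, Complex.norm_I, mul_one, Complex.norm_real, Real.norm_eq_abs]
  have hs'im : s'.im = t' := by simp [hs'def]
  have hs''im : s''.im = t'' := by simp [hs''def]
  have hs'eq : s' = s'' + h := by rw [hs'def, hs''def, hh]; push_cast; ring
  set t₀ : ℝ := t'' - 1 with ht₀def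
  have ht₀ : |σ| + 10 ≤ t₀ := by simp [ht₀def]; linarith
  have ht₀pos : (0:ℝ) < t₀ := by linarith
  set D : ℕ → ℝ := fun k => (max ((k:ℝ) - |σ|) 0)^2 + t₀^2 with hDdef
  have hDpos : ∀ k, 0 < D k := by
    intro k
    have : (0:ℝ) ≤ (max ((k:ℝ) - |σ|) 0)^2 := sq_nonneg _
    have := sq_nonneg t₀
    simp only [hDdef]
    positivity
  -- imaginary parts
  have him1 : ∀ (k:ℕ) (τ:ℝ), (s'' + k + τ*h).im = t'' + τ*(t'-t'') := by
    intro k τ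
    simp [hs''def, hh]
  have him2 : ∀ (k:ℕ) (τ:ℝ), (s'' + k + τ*(1:ℂ)).im = t'' := by
    intro k τ
    simp [hs''def]
  have hre1 : ∀ (k:ℕ) (τ:ℝ), (s'' + k + τ*h).re = σ + k := by
    intro k τ
    simp [hs''def, hh]
  have hre2 : ∀ (k:ℕ) (τ:ℝ), (s'' + k + τ*(1:ℂ)).re = σ + k + τ := by
    intro k τ
    simp [hs''def]
  have htau : ∀ τ : ℝ, τ ∈ Set.uIcc (0:ℝ) 1 → |τ*(t'-t'')| ≤ 1/3 := by
    intro τ hτ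
    rw [Set.uIcc_of_le zero_le_one] at hτ
    rw [abs_mul]
    calc |τ| * |t'-t''| ≤ 1 * (1/3) := by
          apply mul_le_mul _ hd (abs_nonneg _) zero_le_one
          rw [abs_le]; constructor <;> [linarith [hτ.1]; exact hτ.2]
    _ = 1/3 := by norm_num
  have him1' : ∀ (k:ℕ) (τ:ℝ), τ ∈ Set.uIcc (0:ℝ) 1 → t₀ ≤ (s'' + k + τ*h).im := by
    intro k τ hτ
    rw [him1]
    have := htau τ hτ
    have := abs_le.mp this
    linarith [this.1]
  have him1ne : ∀ (k:ℕ) (τ:ℝ), τ ∈ Set.uIcc (0:ℝ) 1 → (s'' + k + τ*h).im ≠ 0 := by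
    intro k τ hτ
    have := him1' k τ hτ
    linarith
  have him2ne : ∀ (k:ℕ) (τ:ℝ), τ ∈ Set.uIcc (0:ℝ) 1 → (s'' + k + τ*(1:ℂ)).im ≠ 0 := by
    intro k τ _
    rw [him2]
    linarith
  -- norm lower bounds
  have hnormlow : ∀ (k:ℕ) (τ:ℝ), τ ∈ Set.uIcc (0:ℝ) 1 →
      D k ≤ ‖(s'' + k + τ*h) * (s'' + k + τ*(1:ℂ))‖ := by
    intro k τ hτ
    have hτ' := hτ
    rw [Set.uIcc_of_le zero_le_one] at hτ'
    set m : ℝ := max ((k:ℝ) - |σ|) 0 with hmdef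
    have hm0 : (0:ℝ) ≤ m := le_max_right _ _
    have hkm : m ≤ |(σ:ℝ) + k| := by
      apply max_le _ (abs_nonneg _)
      have h1 : σ + (k:ℝ) ≤ |σ + (k:ℝ)| := le_abs_self _
      linarith [neg_abs_le σ]
    have h1 : Real.sqrt (D k) ≤ ‖s'' + k + τ*h‖ := by
      apply norm_lower _ m t₀ hm0 _ ht₀pos.le _
      · rw [hre1]
        exact hkm
      · rw [him1]
        have h2 := him1' k τ hτ
        rw [him1] at h2
        exact h2.trans (le_abs_self _)
    have h2 : Real.sqrt (D k) ≤ ‖s'' + k + τ*(1:ℂ)‖ := by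
      apply norm_lower _ m t₀ hm0 _ ht₀pos.le _
      · rw [hre2]
        apply max_le _ (abs_nonneg _)
        have h1 : σ + (k:ℝ) + τ ≤ |σ + (k:ℝ) + τ| := le_abs_self _
        linarith [neg_abs_le σ, hτ'.1]
      · rw [him2]
        refine le_trans ?_ (le_abs_self _)
        linarith
    rw [norm_mul]
    calc D k = Real.sqrt (D k) * Real.sqrt (D k) := (Real.mul_self_sqrt (hDpos k).le).symm
    _ ≤ ‖s'' + k + τ*h‖ * ‖s'' + k + τ*(1:ℂ)‖ :=
        mul_le_mul h1 h2 (Real.sqrt_nonneg _) (norm_nonneg _)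
  -- nonvanishing
  have hne1 : ∀ (k:ℕ) (τ:ℝ), τ ∈ Set.uIcc (0:ℝ) 1 → s'' + k + τ*h ≠ 0 := by
    intro k τ hτ h0
    exact him1ne k τ hτ (by rw [h0]; simp)
  have hne2 : ∀ (k:ℕ) (τ:ℝ), τ ∈ Set.uIcc (0:ℝ) 1 → s'' + k + τ*(1:ℂ) ≠ 0 := by
    intro k τ hτ h0
    exact him2ne k τ hτ (by rw [h0]; simp)
  -- A sequence
  set A : ℕ → ℂ := fun k => Complex.log (s''+k) - Complex.log (s'+k) +
    (h * Complex.log (s''+((k+1:ℕ):ℂ)) - h * Complex.log (s''+k)) with hAdef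
  have hlog1 : ∀ k:ℕ, Complex.log (s'+k) - Complex.log (s''+k)
      = ∫ τ in (0:ℝ)..1, h/(s''+k+τ*h) := by
    intro k
    have H := log_diff_eq_integral (s''+k) h (fun τ hτ => by
      simpa [add_right_comm] using him1ne k τ hτ)
    rw [show s''+(k:ℂ)+h = s'+(k:ℂ) by rw [hs'eq]; ring] at H
    simpa [add_right_comm] using H
  have hlog2 : ∀ k:ℕ, Complex.log (s''+((k+1:ℕ):ℂ)) - Complex.log (s''+k)
      = ∫ τ in (0:ℝ)..1, 1/(s''+k+τ*(1:ℂ)) := by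
    intro k
    have H := log_diff_eq_integral (s''+k) 1 (fun τ hτ => by
      simpa [add_right_comm] using him2ne k τ hτ)
    rw [show s''+(k:ℂ)+1 = s''+((k+1:ℕ):ℂ) by push_cast; ring] at H
    simpa [add_right_comm] using H
  have hInt1 : ∀ k:ℕ, IntervalIntegrable (fun τ:ℝ => h/(s''+k+τ*h))
      MeasureTheory.volume 0 1 := by
    intro k
    apply ContinuousOn.intervalIntegrable
    apply ContinuousOn.div continuousOn_const
    · fun_prop
    · exact fun τ hτ => hne1 k τ hτ
  have hInt2 : ∀ k:ℕ, IntervalIntegrable (fun τ:ℝ => h/(s''+k+τ*(1:ℂ)))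
      MeasureTheory.volume 0 1 := by
    intro k
    apply ContinuousOn.intervalIntegrable
    apply ContinuousOn.div continuousOn_const
    · fun_prop
    · exact fun τ hτ => hne2 k τ hτ
  have hAeq : ∀ k:ℕ, A k = ∫ τ in (0:ℝ)..1, (h/(s''+k+τ*(1:ℂ)) - h/(s''+k+τ*h)) := by
    intro k
    rw [intervalIntegral.integral_sub (hInt2 k) (hInt1 k)]
    have e1 := hlog1 k
    have e2 := hlog2 k
    have e3 : (∫ τ in (0:ℝ)..1, h/(s''+k+τ*(1:ℂ)))
        = h * ∫ τ in (0:ℝ)..1, 1/(s''+k+τ*(1:ℂ)) := by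
      rw [← intervalIntegral.integral_const_mul]
      congr 1
      ext τ
      rw [mul_one_div]
    rw [e3, ← e2, ← e1, hAdef]
    ring
  have hAbound : ∀ k:ℕ, ‖A k‖ ≤ 2*‖h‖ * (1/D k) := by
    intro k
    rw [hAeq k]
    have := intervalIntegral.norm_integral_le_of_norm_le_const
      (a := (0:ℝ)) (b := 1) (C := 2*‖h‖ * (1/D k))
      (f := fun τ:ℝ => h/(s''+k+τ*(1:ℂ)) - h/(s''+k+τ*h)) ?_
    · simpa using this
    intro τ hτ
    show ‖h/(s''+k+(τ:ℂ)*(1:ℂ)) - h/(s''+k+(τ:ℂ)*h)‖ ≤ 2*‖h‖*(1/D k)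
    have hτ' : τ ∈ Set.uIcc (0:ℝ) 1 := by
      rw [Set.uIoc_of_le zero_le_one] at hτ
      rw [Set.uIcc_of_le zero_le_one]
      exact ⟨hτ.1.le, hτ.2⟩
    have hτ'' : τ ∈ Set.Icc (0:ℝ) 1 := by
      rwa [← Set.uIcc_of_le zero_le_one]
    have hg1 := hne1 k τ hτ'
    have hg2 := hne2 k τ hτ'
    have heq : h/(s''+k+(τ:ℂ)*(1:ℂ)) - h/(s''+k+(τ:ℂ)*h)
        = h*((τ:ℂ)*(h-1))/((s''+k+(τ:ℂ)*h)*(s''+k+(τ:ℂ)*(1:ℂ))) := by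
      rw [div_sub_div_helper h _ _ hg1 hg2,
        show (s''+(k:ℂ)+(τ:ℂ)*h) - (s''+(k:ℂ)+(τ:ℂ)*(1:ℂ)) = (τ:ℂ)*(h-1) by ring]
    rw [heq, norm_div]
    have hnum : ‖h*(τ*(h-1))‖ ≤ 2*‖h‖ := by
      rw [norm_mul h ((τ:ℂ)*(h-1)), norm_mul (τ:ℂ) (h-1)]
      have h1 : ‖(τ:ℂ)‖ ≤ 1 := by
        rw [Complex.norm_real, Real.norm_eq_abs, abs_le]
        exact ⟨by linarith [hτ''.1], hτ''.2⟩
      have h2 : ‖h-1‖ ≤ 2 := by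
        calc ‖h-1‖ ≤ ‖h‖ + ‖(1:ℂ)‖ := norm_sub_le _ _
        _ ≤ 1/3 + 1 := by rw [norm_one]; rw [hnormh]; linarith [hd]
        _ ≤ 2 := by norm_num
      calc ‖h‖ * (‖(τ:ℂ)‖ * ‖h-1‖) ≤ ‖h‖ * (1 * 2) := by
            apply mul_le_mul_of_nonneg_left _ (norm_nonneg h)
            exact mul_le_mul h1 h2 (norm_nonneg _) zero_le_one
      _ = 2*‖h‖ := by ring
    calc ‖h*((τ:ℂ)*(h-1))‖ / ‖(s''+k+(τ:ℂ)*h)*(s''+k+(τ:ℂ)*(1:ℂ))‖ ≤ 2*‖h‖ / D k :=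
          div_le_div₀ (by positivity) hnum (hDpos k) (hnormlow k τ hτ')
    _ = 2*‖h‖ * (1/D k) := by ring
  -- sum of 1/D
  set bb : ℝ := t₀ + |σ| with hbbdef
  have hbb : (10:ℝ) ≤ bb := by rw [hbbdef]; linarith
  have hDsum : ∀ k:ℕ, 1/D k ≤ 10*(1/((k:ℝ)+bb) - 1/((k:ℝ)+1+bb)) := by
    intro k
    have hk0 : (0:ℝ) ≤ (k:ℝ) := Nat.cast_nonneg k
    have hkb : (0:ℝ) < (k:ℝ)+bb := by linarith
    have hkb1 : (0:ℝ) < (k:ℝ)+1+bb := by linarith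
    set m : ℝ := max ((k:ℝ) - |σ|) 0 with hmdef
    have hm0 : (0:ℝ) ≤ m := le_max_right _ _
    have hmk : (k:ℝ) - |σ| ≤ m := le_max_left _ _
    have key : ((k:ℝ)+bb)*((k:ℝ)+1+bb) ≤ 10*D k := by
      have h1 : (k:ℝ)+1+bb ≤ m+3*t₀ := by
        rw [hbbdef]
        linarith [hmk, ht₀]
      have hDk : D k = m^2 + t₀^2 := by rw [hDdef]
      rw [hDk]
      nlinarith [sq_nonneg (3*m - t₀), hm0, ht₀pos, h1, hkb, hkb1]
    calc 1/D k ≤ 10/(((k:ℝ)+bb)*((k:ℝ)+1+bb)) := by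
          rw [div_le_div_iff₀ (hDpos k) (by positivity)]
          linarith [key]
    _ = 10*(1/((k:ℝ)+bb) - 1/((k:ℝ)+1+bb)) := by
          field_simp
          try ring
  have hsumD : ∀ n:ℕ, ∑ k ∈ Finset.range n, (1/D k) ≤ 10/t₀ := by
    intro n
    calc ∑ k ∈ Finset.range n, (1/D k)
        ≤ ∑ k ∈ Finset.range n, 10*(1/((k:ℝ)+bb) - 1/((k:ℝ)+1+bb)) :=
          Finset.sum_le_sum (fun k _ => hDsum k)
    _ = 10*(1/((0:ℝ)+bb) - 1/((n:ℝ)+bb)) := by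
        rw [← Finset.mul_sum]
        congr 1
        have H := Finset.sum_range_sub' (f := fun k:ℕ => 1/((k:ℝ)+bb)) n
        push_cast at H ⊢
        rw [← H]
    _ ≤ 10/t₀ := by
        have h1 : 1/bb ≤ 1/t₀ := by
          apply one_div_le_one_div_of_le ht₀pos
          rw [hbbdef]; linarith
        have h2 : (0:ℝ) ≤ 1/((n:ℝ)+bb) := by positivity
        rw [zero_add]
        calc 10*(1/bb - 1/((n:ℝ)+bb)) ≤ 10*(1/t₀) := by nlinarith
        _ = 10/t₀ := by ring
  have hsumA : ∀ n:ℕ, ∑ k ∈ Finset.range n, ‖A k‖ ≤ 2*‖h‖ := by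
    intro n
    calc ∑ k ∈ Finset.range n, ‖A k‖ ≤ ∑ k ∈ Finset.range n, 2*‖h‖*(1/D k) :=
          Finset.sum_le_sum (fun k _ => hAbound k)
    _ = 2*‖h‖ * ∑ k ∈ Finset.range n, (1/D k) := by rw [Finset.mul_sum]
    _ ≤ 2*‖h‖ * 1 := by
          apply mul_le_mul_of_nonneg_left _ (by positivity)
          calc ∑ k ∈ Finset.range n, (1/D k) ≤ 10/t₀ := hsumD n
          _ ≤ 1 := by
                rw [div_le_one ht₀pos]
                linarith
    _ = 2*‖h‖ := by ring
  -- endgame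
  have hs'ne : s'.im ≠ 0 := by rw [hs'im]; linarith
  have hs''ne : s''.im ≠ 0 := by rw [hs''im]; linarith
  have hGne : Complex.Gamma s'' ≠ 0 := by
    apply Complex.Gamma_ne_zero
    intro m H
    apply hs''ne
    rw [H]
    simp
  set z : ℕ → ℂ := fun n => ∑ k ∈ Finset.range (n+1), A k +
    h*((Real.log n : ℂ) - Complex.log (s'' + (n:ℂ) + 1)) with hzdef
  have hz_exp : ∀ n:ℕ, 1 ≤ n → Complex.exp (z n) =
      Complex.GammaSeq s' n / Complex.GammaSeq s'' n * Complex.exp (-(h * Complex.log s'')) := by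
    intro n hn
    rw [gammaSeq_ratio s' s'' hs'ne hs''ne hn, ← Complex.exp_add]
    congr 1
    have htel : ∑ k ∈ Finset.range (n+1),
        (h * Complex.log (s''+((k+1:ℕ):ℂ)) - h * Complex.log (s''+(k:ℂ)))
        = h * Complex.log (s''+((n+1:ℕ):ℂ)) - h * Complex.log (s''+((0:ℕ):ℂ)) :=
      Finset.sum_range_sub (f := fun k:ℕ => h * Complex.log (s''+(k:ℂ))) (n+1)
    have hsplit : ∑ k ∈ Finset.range (n+1), A k
        = (∑ k ∈ Finset.range (n+1), (Complex.log (s''+(k:ℂ)) - Complex.log (s'+(k:ℂ))))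
          + (h * Complex.log (s''+((n+1:ℕ):ℂ)) - h * Complex.log (s''+((0:ℕ):ℂ))) := by
      rw [← htel, ← Finset.sum_add_distrib]
    have hz2 : z n = ∑ k ∈ Finset.range (n+1),
        (Complex.log (s''+(k:ℂ)) - Complex.log (s'+(k:ℂ)))
        + h * Complex.log (s''+((n+1:ℕ):ℂ)) - h * Complex.log (s''+((0:ℕ):ℂ))
        + h*((Real.log n : ℂ) - Complex.log (s'' + (n:ℂ) + 1)) := by
      simp only [hzdef]
      rw [hsplit]
      ring
    rw [hz2, show s''+((n+1:ℕ):ℂ) = s''+(n:ℂ)+1 by push_cast; ring,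
      show s''+((0:ℕ):ℂ) = s'' by push_cast; ring, hs'eq]
    ring
  set P : ℂ := Complex.Gamma s' / Complex.Gamma s'' * Complex.exp (-(h*Complex.log s''))
    with hPdef
  have hP0 : Tendsto (fun n => Complex.exp (z n)) atTop (𝓝 P) := by
    have h1 := ((Complex.GammaSeq_tendsto_Gamma s').div
      (Complex.GammaSeq_tendsto_Gamma s'') hGne).mul_const
      (Complex.exp (-(h*Complex.log s'')))
    apply h1.congr'
    filter_upwards [eventually_ge_atTop 1] with n hn
    exact (hz_exp n hn).symm
  have hzb : ∀ᶠ n in atTop, ‖z n‖ ≤ 3*‖h‖ := by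
    have hlog0 := log_shift_tendsto s'' hs''ne
    have h2 : ∀ᶠ n : ℕ in atTop, ‖Complex.log (s''+(n:ℂ)+1) - (Real.log n : ℂ)‖ < 1 :=
      hlog0.norm.eventually (gt_mem_nhds (by norm_num))
    filter_upwards [h2] with n hn
    calc ‖z n‖ ≤ ‖∑ k ∈ Finset.range (n+1), A k‖ +
        ‖h*((Real.log n : ℂ) - Complex.log (s'' + (n:ℂ) + 1))‖ := norm_add_le _ _
    _ ≤ 2*‖h‖ + ‖h‖*1 := by
        apply add_le_add
        · calc ‖∑ k ∈ Finset.range (n+1), A k‖ ≤ ∑ k ∈ Finset.range (n+1), ‖A k‖ :=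
              norm_sum_le _ _
          _ ≤ 2*‖h‖ := hsumA (n+1)
        · rw [norm_mul]
          apply mul_le_mul_of_nonneg_left _ (norm_nonneg h)
          rw [← norm_neg]
          simp only [neg_sub]
          exact hn.le
    _ = 3*‖h‖ := by ring
  have hexpb : ∀ᶠ n in atTop, ‖Complex.exp (z n) - 1‖ ≤ 6*‖h‖ := by
    filter_upwards [hzb] with n hn
    have hz1 : ‖z n‖ ≤ 1 := by
      calc ‖z n‖ ≤ 3*‖h‖ := hn
      _ ≤ 1 := by rw [hnormh]; linarith [hd]
    calc ‖Complex.exp (z n) - 1‖ = ‖Complex.exp (z n) - 1‖ := rfl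
    _ ≤ 2 * ‖z n‖ := Complex.norm_exp_sub_one_le hz1
    _ ≤ 2 * (3*‖h‖) := by
        apply mul_le_mul_of_nonneg_left _ (by norm_num)
        exact hn
    _ = 6*‖h‖ := by ring
  have hPb : ‖P - 1‖ ≤ 6*‖h‖ :=
    le_of_tendsto ((hP0.sub_const 1).norm) hexpb
  refine ⟨P, ?_, by rwa [hnormh] at hPb⟩
  rw [hPdef]
  calc Complex.Gamma s' / Complex.Gamma s''
      = Complex.Gamma s' / Complex.Gamma s'' *
        (Complex.exp (-(h*Complex.log s'')) * Complex.exp (h*Complex.log s'')) := by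
        rw [← Complex.exp_add]
        simp
  _ = Complex.exp (h * Complex.log s'') *
      (Complex.Gamma s' / Complex.Gamma s'' * Complex.exp (-(h*Complex.log s''))) := by ring

theorem gamma_ratio_phase_asymptotic
    (σ : ℝ) (r ω r' r'' : ℕ → ℝ)
    (hr : Tendsto r atTop atTop)
    (hωpos : ∀ j, 0 < ω j)
    (hω : Tendsto (fun j => ω j * Real.log (r j) / Real.log (Real.log (r j)))
      atTop (𝓝 0))
    (hr' : ∀ j, |r' j - r j| < ω j)
    (hr'' : ∀ j, |r'' j - r j| < ω j) :
    Tendsto (fun j =>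
        Complex.Gamma ((σ : ℂ) + (r' j : ℂ) * Complex.I) /
          Complex.Gamma ((σ : ℂ) + (r'' j : ℂ) * Complex.I) -
        Complex.exp (Complex.I * ((r' j : ℂ) - (r'' j : ℂ)) * (Real.log (r j) : ℂ)))
      atTop (𝓝 0) := by
  -- step 1 : ω → 0
  have hlr : Tendsto (fun j => Real.log (r j)) atTop atTop :=
    Real.tendsto_log_atTop.comp hr
  have hdiv : Tendsto (fun x : ℝ => Real.log x / x) atTop (𝓝 0) :=
    Real.isLittleO_log_id_atTop.tendsto_div_nhds_zero
  have hllr : Tendsto (fun j => Real.log (Real.log (r j)) / Real.log (r j)) atTop (𝓝 0) :=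
    hdiv.comp hlr
  have hω0 : Tendsto ω atTop (𝓝 0) := by
    have hmul := hω.mul hllr
    rw [mul_zero] at hmul
    apply hmul.congr'
    filter_upwards [hlr.eventually_ge_atTop 3] with j hj
    have h1 : (0:ℝ) < Real.log (r j) := by linarith
    have h2 : (0:ℝ) < Real.log (Real.log (r j)) := by
      have := Real.log_le_log (by norm_num : (0:ℝ) < 3) hj
      have h3 : (1:ℝ) < Real.log 3 := by
        have := Real.exp_one_lt_d9
        rw [← Real.exp_lt_exp (x := 1) (y := Real.log 3), Real.exp_log (by norm_num)]
        linarith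
      linarith
    field_simp
  -- step 2 : eventual bound
  have hgoal : ∀ᶠ j in atTop,
      ‖Complex.Gamma ((σ : ℂ) + (r' j : ℂ) * Complex.I) /
          Complex.Gamma ((σ : ℂ) + (r'' j : ℂ) * Complex.I) -
        Complex.exp (Complex.I * ((r' j : ℂ) - (r'' j : ℂ)) * (Real.log (r j) : ℂ))‖
        ≤ 60 * ω j := by
    filter_upwards [hω0.eventually (gt_mem_nhds (show (0:ℝ) < 1/12 by norm_num)),
      hr.eventually_ge_atTop (|σ| + 12)] with j hω12 hrj
    have hσ0 : (0:ℝ) ≤ |σ| := abs_nonneg σ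
    have hωp := hωpos j
    have ha' := abs_lt.mp (hr' j)
    have ha'' := abs_lt.mp (hr'' j)
    have hd : |r' j - r'' j| ≤ 1/3 := by
      rw [abs_le]
      constructor <;> nlinarith [ha'.1, ha'.2, ha''.1, ha''.2]
    have ht'' : |σ| + 11 ≤ r'' j := by nlinarith [ha''.1]
    have ht' : |σ| + 11 ≤ r' j := by nlinarith [ha'.1]
    obtain ⟨P, hP1, hP2⟩ := gamma_ratio_key σ (r' j) (r'' j) hd ht'' ht'
    set L : ℂ := (Real.log (r j) : ℂ) with hLdef
    set s'' : ℂ := (σ:ℂ) + (r'' j:ℂ)*I with hs''def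
    set hc : ℂ := I*((r' j:ℂ) - (r'' j:ℂ)) with hcdef
    have hnormhc : ‖hc‖ = |r' j - r'' j| := by
      rw [hcdef, show ((r' j:ℂ) - (r'' j:ℂ)) = ((r' j - r'' j : ℝ):ℂ) by push_cast; ring,
        norm_mul, Complex.norm_I, one_mul, Complex.norm_real, Real.norm_eq_abs]
    have hnormhc2 : ‖hc‖ ≤ 2*ω j := by
      rw [hnormhc, abs_le]
      constructor <;> nlinarith [ha'.1, ha'.2, ha''.1, ha''.2]
    have hrpos : (0:ℝ) < r j := by linarith
    have habs1 : ‖s''‖ ≤ 2*(r j) := by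
      rw [hs''def]
      calc ‖(σ:ℂ) + (r'' j:ℂ)*I‖ ≤ ‖(σ:ℂ)‖ + ‖(r'' j:ℂ)*I‖ :=
            norm_add_le _ _
      _ = |σ| + |r'' j| := by
          rw [norm_mul, Complex.norm_I, mul_one, Complex.norm_real, Complex.norm_real,
            Real.norm_eq_abs, Real.norm_eq_abs]
      _ ≤ 2*(r j) := by
          rw [abs_of_pos (by linarith : (0:ℝ) < r'' j)]
          nlinarith [ha''.2]
    have habs2 : r j/2 ≤ ‖s''‖ := by
      calc r j/2 ≤ r'' j := by nlinarith [ha''.1]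
      _ = |s''.im| := by rw [hs''def]; simp; rw [abs_of_pos (by linarith : (0:ℝ) < r'' j)]
      _ ≤ ‖s''‖ := Complex.abs_im_le_norm s''
    have hlogdiff : ‖Complex.log s'' - L‖ ≤ 6 := by
      have hre : (Complex.log s'' - L).re = Real.log ‖s''‖ - Real.log (r j) := by
        rw [Complex.sub_re, Complex.log_re, hLdef, Complex.ofReal_re]
      have him : (Complex.log s'' - L).im = Complex.arg s'' := by
        rw [Complex.sub_im, Complex.log_im, hLdef, Complex.ofReal_im, sub_zero]
      have l1 : Real.log ‖s''‖ ≤ Real.log 2 + Real.log (r j) := by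
        rw [← Real.log_mul (by norm_num) hrpos.ne']
        exact Real.log_le_log (lt_of_lt_of_le (by linarith) habs2) habs1
      have l2 : Real.log (r j) - Real.log 2 ≤ Real.log ‖s''‖ := by
        rw [← Real.log_div hrpos.ne' (by norm_num)]
        exact Real.log_le_log (by positivity) habs2
      have l3 : Real.log 2 ≤ 1 := by
        have := Real.log_two_lt_d9
        linarith
      calc ‖Complex.log s'' - L‖ ≤ |(Complex.log s'' - L).re| + |(Complex.log s'' - L).im| :=
            Complex.norm_le_abs_re_add_abs_im _
      _ ≤ 1 + 4 := by
          apply add_le_add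
          · rw [hre, abs_le]
            constructor <;> linarith
          · rw [him]
            calc |Complex.arg s''| ≤ Real.pi := Complex.abs_arg_le_pi s''
            _ ≤ 4 := Real.pi_le_four
      _ ≤ 6 := by norm_num
    have hu1 : ‖hc*(Complex.log s'' - L)‖ ≤ 12*ω j := by
      rw [norm_mul]
      calc ‖hc‖ * ‖Complex.log s'' - L‖ ≤ (2*ω j) * 6 :=
            mul_le_mul hnormhc2 hlogdiff (norm_nonneg _) (by linarith)
      _ = 12*ω j := by ring
    have hu2 : ‖hc*(Complex.log s'' - L)‖ ≤ 1 := by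
      calc ‖hc*(Complex.log s'' - L)‖ ≤ 12*ω j := hu1
      _ ≤ 1 := by linarith
    have hP2' : ‖P - 1‖ ≤ 12*ω j := by
      calc ‖P - 1‖ ≤ 6*|r' j - r'' j| := hP2
      _ = 6*‖hc‖ := by rw [hnormhc]
      _ ≤ 6*(2*ω j) := by linarith [hnormhc2]
      _ = 12*ω j := by ring
    have hfact : Complex.Gamma ((σ : ℂ) + (r' j : ℂ) * I) /
          Complex.Gamma ((σ : ℂ) + (r'' j : ℂ) * I) - Complex.exp (hc * L)
        = Complex.exp (hc * L) * (Complex.exp (hc*(Complex.log s'' - L))*P - 1) := by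
      rw [hP1, mul_sub, mul_one, ← mul_assoc, ← Complex.exp_add,
        show hc*L + hc*(Complex.log s'' - L) = hc * Complex.log s'' by ring]
    have hnorm1 : ‖Complex.exp (hc * L)‖ = 1 := by
      rw [Complex.norm_exp]
      have : (hc * L).re = 0 := by
        rw [hcdef, hLdef, show ((r' j:ℂ) - (r'' j:ℂ)) = ((r' j - r'' j : ℝ):ℂ) by push_cast; ring]
        simp [Complex.mul_re, Complex.mul_im]
      rw [this, Real.exp_zero]
    calc ‖Complex.Gamma ((σ : ℂ) + (r' j : ℂ) * I) /
          Complex.Gamma ((σ : ℂ) + (r'' j : ℂ) * I) - Complex.exp (hc * L)‖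
        = ‖Complex.exp (hc * L)‖ * ‖Complex.exp (hc*(Complex.log s'' - L))*P - 1‖ := by
          rw [hfact, norm_mul]
    _ = ‖Complex.exp (hc*(Complex.log s'' - L))*P - 1‖ := by rw [hnorm1, one_mul]
    _ = ‖Complex.exp (hc*(Complex.log s'' - L))*(P - 1) +
          (Complex.exp (hc*(Complex.log s'' - L)) - 1)‖ := by ring_nf
    _ ≤ ‖Complex.exp (hc*(Complex.log s'' - L))*(P - 1)‖ +
          ‖Complex.exp (hc*(Complex.log s'' - L)) - 1‖ := norm_add_le _ _
    _ ≤ 3*(12*ω j) + 2*(12*ω j) := by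
        apply add_le_add
        · rw [norm_mul]
          have he : ‖Complex.exp (hc*(Complex.log s'' - L))‖ ≤ 3 := by
            rw [Complex.norm_exp]
            have h5 : (hc*(Complex.log s'' - L)).re ≤ 1 := by
              calc (hc*(Complex.log s'' - L)).re ≤ |(hc*(Complex.log s'' - L)).re| := le_abs_self _
              _ ≤ ‖hc*(Complex.log s'' - L)‖ := Complex.abs_re_le_norm _
              _ ≤ 1 := hu2
            calc Real.exp ((hc*(Complex.log s'' - L)).re) ≤ Real.exp 1 := Real.exp_le_exp.mpr h5
            _ ≤ 3 := by linarith [Real.exp_one_lt_d9]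
          exact mul_le_mul he hP2' (norm_nonneg _) (by norm_num)
        · have := Complex.norm_exp_sub_one_le (x := hc*(Complex.log s'' - L))
            (by exact hu2)
          linarith [hu1, this]
    _ = 60 * ω j := by ring
  apply squeeze_zero_norm' hgoal
  have := hω0.const_mul (60:ℝ)
  simpa using this
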